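/- For all integers p ≥ 1, n ≥ 1, every real λ ≥ 0 and every real w > 0, the integrals ∫₀^∞ u² f_p(uw;λ) f_n(u) du and ∫₀^∞ u³ f_p(uw;λ) f_n(u) du are finite and positive, and (n+p+2) · ∫₀^∞ u² f_p(uw;λ) f_n(u) du ≤ (1+w) · ∫₀^∞ u³ f_p(uw;λ) f_n(u) du; equivalently, the ratio of the first integral to the second is at most (1+w)/(n+p+2). -/

import Mathlib

open MeasureTheory Real Set
open scoped ENNReal NNReal

noncomputable section

/-- Density of the chi-square distribution with `k` degrees of freedom. -/
def chiSqPdf (k : ℕ) (x : ℝ) : ℝ :=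
  if 0 < x then
    x ^ ((k : ℝ) / 2 - 1) * Real.exp (-x / 2) /
      (2 ^ ((k : ℝ) / 2) * Real.Gamma ((k : ℝ) / 2))
  else 0

/-- Density of the noncentral chi-square distribution with `p` degrees of freedom and
noncentrality parameter `lam`. -/
def ncChiSqPdf (p : ℕ) (lam : ℝ) (x : ℝ) : ℝ :=
  ∑' j : ℕ, Real.exp (-lam / 2) * ((lam / 2) ^ j / (Nat.factorial j)) * chiSqPdf (p + 2 * j) x

namespace Stmt12Aux

lemma chiSqPdf_nonneg (k : ℕ) (x : ℝ) : 0 ≤ chiSqPdf k x := by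
  unfold chiSqPdf
  split_ifs with h
  · apply div_nonneg (by positivity)
    exact mul_nonneg (by positivity) (Real.Gamma_nonneg_of_nonneg (by positivity))
  · exact le_rfl

lemma chiSqPdf_of_nonpos (k : ℕ) {x : ℝ} (hx : ¬ 0 < x) : chiSqPdf k x = 0 := by
  unfold chiSqPdf; rw [if_neg hx]

lemma measurable_chiSqPdf (k : ℕ) : Measurable (chiSqPdf k) := by
  unfold chiSqPdf
  refine Measurable.ite (measurableSet_lt measurable_const measurable_id) ?_ measurable_const
  exact ((measurable_id'.pow_const _).mul ((measurable_id'.neg.div_const 2).exp)).div_const _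

lemma tsum_eq_toReal_tsum_ofReal {f : ℕ → ℝ} (hf : ∀ j, 0 ≤ f j) :
    ∑' j, f j = (∑' j, ENNReal.ofReal (f j)).toReal := by
  by_cases hs : Summable f
  · rw [← ENNReal.ofReal_tsum_of_nonneg hf hs, ENNReal.toReal_ofReal (tsum_nonneg fun j => hf j)]
  · rw [tsum_eq_zero_of_not_summable hs]
    by_cases ht : (∑' j, ENNReal.ofReal (f j)) = ⊤
    · rw [ht]; simp
    · exact absurd ((ENNReal.summable_toReal ht).congr
        fun j => ENNReal.toReal_ofReal (hf j)) hs

lemma ofReal_tsum_le {f : ℕ → ℝ} (hf : ∀ j, 0 ≤ f j) :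
    ENNReal.ofReal (∑' j, f j) ≤ ∑' j, ENNReal.ofReal (f j) := by
  by_cases hs : Summable f
  · rw [ENNReal.ofReal_tsum_of_nonneg hf hs]
  · rw [tsum_eq_zero_of_not_summable hs]; simp

lemma measurable_ncChiSqPdf (p : ℕ) (lam : ℝ) (hlam : 0 ≤ lam) :
    Measurable (ncChiSqPdf p lam) := by
  have hnn : ∀ (j : ℕ) (x : ℝ),
      0 ≤ Real.exp (-lam / 2) * ((lam / 2) ^ j / (Nat.factorial j)) * chiSqPdf (p + 2 * j) x :=
    fun j x => mul_nonneg (mul_nonneg (Real.exp_pos _).le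
      (div_nonneg (pow_nonneg (by linarith) _) (by positivity))) (chiSqPdf_nonneg _ _)
  have heq : ncChiSqPdf p lam = fun x => (∑' j : ℕ, ENNReal.ofReal
      (Real.exp (-lam / 2) * ((lam / 2) ^ j / (Nat.factorial j)) * chiSqPdf (p + 2 * j) x)).toReal := by
    funext x
    exact tsum_eq_toReal_tsum_ofReal (fun j => hnn j x)
  rw [heq]
  refine (Measurable.ennreal_tsum fun j => ?_).ennreal_toReal
  exact (((measurable_chiSqPdf _).const_mul _)).ennreal_ofReal

/-- Poisson weights. -/
def cj (lam : ℝ) (j : ℕ) : ℝ := Real.exp (-lam / 2) * ((lam / 2) ^ j / (Nat.factorial j))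

/-- constant factor of the `j`-th term. -/
def Aa (p n : ℕ) (w : ℝ) (j : ℕ) : ℝ :=
  w ^ ((p : ℝ) / 2 + j - 1) /
    (2 ^ ((p : ℝ) / 2 + j) * Real.Gamma ((p : ℝ) / 2 + j) *
      (2 ^ ((n : ℝ) / 2) * Real.Gamma ((n : ℝ) / 2)))

/-- exponent parameter of the `j`-th term. -/
def Ss (p n m : ℕ) (j : ℕ) : ℝ := (m : ℝ) + ((p : ℝ) / 2 + j) + (n : ℝ) / 2 - 1

/-- value of the `j`-th integral. -/
def Jj (p n m : ℕ) (lam w : ℝ) (j : ℕ) : ℝ :=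
  cj lam j * Aa p n w j *
    ((1 / ((1 + w) / 2)) ^ (Ss p n m j) * Real.Gamma (Ss p n m j))

lemma cj_nonneg (lam : ℝ) (hlam : 0 ≤ lam) (j : ℕ) : 0 ≤ cj lam j :=
  mul_nonneg (Real.exp_pos _).le
    (div_nonneg (pow_nonneg (by linarith) _) (by positivity))

lemma cj_pos0 (lam : ℝ) : 0 < cj lam 0 := by
  simp [cj, Nat.factorial]
  positivity

lemma Ss_pos (p n m : ℕ) (hn : 1 ≤ n) (hm : 1 ≤ m) (j : ℕ) : 0 < Ss p n m j := by
  have h1 : (1 : ℝ) ≤ (m : ℝ) := by exact_mod_cast hm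
  have h2 : (0 : ℝ) ≤ (j : ℝ) := Nat.cast_nonneg j
  have h3 : (0 : ℝ) ≤ (p : ℝ) := Nat.cast_nonneg p
  have h4 : (1 : ℝ) ≤ (n : ℝ) := by exact_mod_cast hn
  unfold Ss; nlinarith

lemma Aa_pos (p n : ℕ) (hp : 1 ≤ p) (hn : 1 ≤ n) (w : ℝ) (hw : 0 < w) (j : ℕ) :
    0 < Aa p n w j := by
  have h1 : (0 : ℝ) < (p : ℝ) := by exact_mod_cast hp
  have h2 : (0 : ℝ) < (n : ℝ) := by exact_mod_cast hn
  have h3 : (0 : ℝ) < (p : ℝ) / 2 + j := by positivity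
  unfold Aa
  apply div_pos (Real.rpow_pos_of_pos hw _)
  apply mul_pos (mul_pos (Real.rpow_pos_of_pos two_pos _) (Real.Gamma_pos_of_pos h3))
  exact mul_pos (Real.rpow_pos_of_pos two_pos _) (Real.Gamma_pos_of_pos (by positivity))

lemma Jj_nonneg (p n m : ℕ) (hp : 1 ≤ p) (hn : 1 ≤ n) (hm : 1 ≤ m) (lam w : ℝ)
    (hlam : 0 ≤ lam) (hw : 0 < w) (j : ℕ) : 0 ≤ Jj p n m lam w j := by
  have hb : (0 : ℝ) < 1 / ((1 + w) / 2) := by positivity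
  refine mul_nonneg (mul_nonneg (cj_nonneg lam hlam j) (Aa_pos p n hp hn w hw j).le) ?_
  exact mul_nonneg (Real.rpow_pos_of_pos hb _).le (Real.Gamma_pos_of_pos (Ss_pos p n m hn hm j)).le

lemma Jj_pos0 (p n m : ℕ) (hp : 1 ≤ p) (hn : 1 ≤ n) (hm : 1 ≤ m) (lam w : ℝ)
    (hw : 0 < w) : 0 < Jj p n m lam w 0 := by
  have hb : (0 : ℝ) < 1 / ((1 + w) / 2) := by positivity
  refine mul_pos (mul_pos (cj_pos0 lam) (Aa_pos p n hp hn w hw 0)) ?_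
  exact mul_pos (Real.rpow_pos_of_pos hb _) (Real.Gamma_pos_of_pos (Ss_pos p n m hn hm 0))

lemma pt_eq (p n m j : ℕ) (w u : ℝ) (hw : 0 < w) (hu : 0 < u) (lam : ℝ) :
    u ^ m * (cj lam j * chiSqPdf (p + 2 * j) (u * w)) * chiSqPdf n u
      = (cj lam j * Aa p n w j) * (u ^ (Ss p n m j - 1) * Real.exp (-((1 + w) / 2 * u))) := by
  have huw : 0 < u * w := mul_pos hu hw
  have hcast : ((p + 2 * j : ℕ) : ℝ) / 2 = (p : ℝ) / 2 + j := by push_cast; ring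
  unfold chiSqPdf
  rw [if_pos huw, if_pos hu, hcast, Real.mul_rpow hu.le hw.le]
  have e2 : u ^ (Ss p n m j - 1)
      = u ^ (m : ℕ) * u ^ ((p : ℝ) / 2 + (j : ℝ) - 1) * u ^ ((n : ℝ) / 2 - 1) := by
    rw [← Real.rpow_natCast u m, ← Real.rpow_add hu, ← Real.rpow_add hu]
    unfold Ss; congr 1; ring
  have e3 : Real.exp (-((1 + w) / 2 * u)) = Real.exp (-(u * w) / 2) * Real.exp (-u / 2) := by
    rw [← Real.exp_add]; congr 1; ring
  rw [e2, e3]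
  unfold Aa
  ring

lemma integrableOn_rpow_exp (s b : ℝ) (hs : 0 < s) (hb : 0 < b) :
    IntegrableOn (fun u : ℝ => u ^ (s - 1) * Real.exp (-(b * u))) (Ioi 0) := by
  have h := integrableOn_rpow_mul_exp_neg_mul_rpow (p := 1) (s := s - 1) (b := b)
    (by linarith) one_pos hb
  refine h.congr_fun (fun x hx => ?_) measurableSet_Ioi
  simp only [Real.rpow_one, neg_mul]

lemma term_eval (p n m j : ℕ) (hp : 1 ≤ p) (hn : 1 ≤ n) (hm : 1 ≤ m) (lam w : ℝ)
    (hw : 0 < w) :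
    IntegrableOn (fun u : ℝ =>
        u ^ m * (cj lam j * chiSqPdf (p + 2 * j) (u * w)) * chiSqPdf n u) (Ioi 0) ∧
    ∫ u in Ioi (0 : ℝ), u ^ m * (cj lam j * chiSqPdf (p + 2 * j) (u * w)) * chiSqPdf n u
      = Jj p n m lam w j := by
  have hS : 0 < Ss p n m j := Ss_pos p n m hn hm j
  have hb : (0 : ℝ) < (1 + w) / 2 := by linarith
  have base := (integrableOn_rpow_exp (Ss p n m j) ((1 + w) / 2) hS hb).const_mul
    (cj lam j * Aa p n w j)
  constructor
  · refine IntegrableOn.congr_fun base (fun u hu => ?_) measurableSet_Ioi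
    exact (pt_eq p n m j w u hw hu lam).symm
  · rw [setIntegral_congr_fun measurableSet_Ioi
      (fun u hu => pt_eq p n m j w u hw hu lam), integral_const_mul,
      Real.integral_rpow_mul_exp_neg_mul_Ioi hS hb]
    rfl

lemma Ss_succ (p n m : ℕ) (j : ℕ) : Ss p n m (j + 1) = Ss p n m j + 1 := by
  unfold Ss; push_cast; ring

lemma J_succ (p n m : ℕ) (hp : 1 ≤ p) (hn : 1 ≤ n) (hm : 1 ≤ m) (lam w : ℝ) (hw : 0 < w) (j : ℕ) :
    Jj p n m lam w (j + 1)
      = ((lam / 2) / ((j : ℝ) + 1) * (w / (2 * ((p : ℝ) / 2 + j)))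
          * (Ss p n m j / ((1 + w) / 2))) * Jj p n m lam w j := by
  have hκ : (0 : ℝ) < (p : ℝ) / 2 + j := by
    have : (0 : ℝ) < (p : ℝ) := by exact_mod_cast hp
    positivity
  have hS : 0 < Ss p n m j := Ss_pos p n m hn hm j
  have hb : (0 : ℝ) < 1 / ((1 + w) / 2) := by positivity
  have hΓκ : Real.Gamma ((p : ℝ) / 2 + ((j : ℝ) + 1)) = ((p : ℝ) / 2 + j) * Real.Gamma ((p : ℝ) / 2 + j) := by
    have he : ((p : ℝ) / 2 + ((j : ℝ) + 1)) = ((p : ℝ) / 2 + j) + 1 := by ring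
    rw [he, Real.Gamma_add_one hκ.ne']
  have hΓS : Real.Gamma (Ss p n m (j + 1)) = Ss p n m j * Real.Gamma (Ss p n m j) := by
    rw [Ss_succ, Real.Gamma_add_one hS.ne']
  have hwpow : w ^ ((p : ℝ) / 2 + ((j : ℝ) + 1) - 1) = w ^ ((p : ℝ) / 2 + (j : ℝ) - 1) * w := by
    have he : (p : ℝ) / 2 + ((j : ℝ) + 1) - 1 = ((p : ℝ) / 2 + (j : ℝ) - 1) + 1 := by ring
    rw [he, Real.rpow_add_one hw.ne']
  have h2pow : (2 : ℝ) ^ ((p : ℝ) / 2 + ((j : ℝ) + 1)) = 2 ^ ((p : ℝ) / 2 + (j : ℝ)) * 2 := by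
    have he : (p : ℝ) / 2 + ((j : ℝ) + 1) = ((p : ℝ) / 2 + (j : ℝ)) + 1 := by ring
    rw [he, Real.rpow_add_one (two_ne_zero)]
  have hbpow : (1 / ((1 + w) / 2)) ^ (Ss p n m (j + 1))
      = (1 / ((1 + w) / 2)) ^ (Ss p n m j) * (1 / ((1 + w) / 2)) := by
    rw [Ss_succ, Real.rpow_add_one hb.ne']
  have hcj : cj lam (j + 1) = cj lam j * ((lam / 2) / ((j : ℝ) + 1)) := by
    unfold cj
    rw [pow_succ, Nat.factorial_succ]
    push_cast
    have : ((j : ℝ) + 1) ≠ 0 := by positivity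
    field_simp
  have hΓκ' : Real.Gamma ((p : ℝ) / 2 + j) ≠ 0 := (Real.Gamma_pos_of_pos hκ).ne'
  have hΓn : Real.Gamma ((n : ℝ) / 2) ≠ 0 ∨ True := Or.inr trivial
  unfold Jj Aa
  rw [hΓS, hbpow, hcj]
  push_cast
  rw [hwpow, h2pow, hΓκ]
  have h2κ : (2 : ℝ) ^ ((p : ℝ) / 2 + (j : ℝ)) ≠ 0 := (Real.rpow_pos_of_pos two_pos _).ne'
  have h2n : (2 : ℝ) ^ ((n : ℝ) / 2) ≠ 0 := (Real.rpow_pos_of_pos two_pos _).ne'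
  have hbne : ((1 + w) / 2) ≠ 0 := by positivity
  field_simp

lemma J_summable (p n m : ℕ) (hp : 1 ≤ p) (hn : 1 ≤ n) (hm : 1 ≤ m) (lam w : ℝ)
    (hlam : 0 ≤ lam) (hw : 0 < w) : Summable (Jj p n m lam w) := by
  refine summable_of_ratio_norm_eventually_le (r := 1 / 2) (by norm_num) ?_
  rw [Filter.eventually_atTop]
  refine ⟨⌈2 * (lam * w * ((m : ℝ) + p + n))⌉₊, fun j hj => ?_⟩
  have hj' : 2 * (lam * w * ((m : ℝ) + p + n)) ≤ (j : ℝ) := by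
    calc 2 * (lam * w * ((m : ℝ) + p + n)) ≤ (⌈2 * (lam * w * ((m : ℝ) + p + n))⌉₊ : ℝ) :=
          Nat.le_ceil _
      _ ≤ (j : ℝ) := by exact_mod_cast hj
  have hJn := Jj_nonneg p n m hp hn hm lam w hlam hw
  rw [J_succ p n m hp hn hm lam w hw j, Real.norm_of_nonneg (by
      refine mul_nonneg ?_ (hJn j)
      have hκ : (0 : ℝ) < (p : ℝ) / 2 + j := by
        have : (0 : ℝ) < (p : ℝ) := by exact_mod_cast hp
        positivity
      have := (Ss_pos p n m hn hm j).le
      positivity),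
    Real.norm_of_nonneg (hJn j)]
  refine mul_le_mul_of_nonneg_right ?_ (hJn j)
  -- arithmetic: ratio ≤ 1/2
  have h1 : (1 : ℝ) ≤ (m : ℝ) := by exact_mod_cast hm
  have h2 : (1 : ℝ) ≤ (p : ℝ) := by exact_mod_cast hp
  have h3 : (1 : ℝ) ≤ (n : ℝ) := by exact_mod_cast hn
  have h4 : (0 : ℝ) ≤ (j : ℝ) := Nat.cast_nonneg j
  have hκ : (0 : ℝ) < (p : ℝ) / 2 + j := by positivity
  have hS : 0 < Ss p n m j := Ss_pos p n m hn hm j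
  have hb : (0 : ℝ) < (1 + w) / 2 := by linarith
  have hSle : Ss p n m j ≤ ((m : ℝ) + p + n) * ((j : ℝ) + 1) := by
    unfold Ss; nlinarith
  rw [div_mul_div_comm, div_mul_div_comm, div_le_iff₀ (by positivity)]
  have key : lam * w * Ss p n m j ≤ lam * w * (((m : ℝ) + p + n) * ((j : ℝ) + 1)) := by
    have := mul_nonneg hlam hw.le
    nlinarith
  have h6 : (j : ℝ) + 1 ≤ 2 * ((p : ℝ) / 2 + j) := by linarith
  have hA := mul_le_mul_of_nonneg_left hj' (by positivity : (0:ℝ) ≤ ((j:ℝ)+1)/4)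
  have hB := mul_le_mul_of_nonneg_left h6
    (by positivity : (0:ℝ) ≤ ((j:ℝ)+1)*(1+w)/4)
  nlinarith [key, hA, hB, mul_nonneg (mul_nonneg h4 h4) hw.le,
    mul_nonneg (mul_nonneg (by linarith : (0:ℝ) ≤ (j:ℝ)+1) (by linarith : (0:ℝ) ≤ (j:ℝ)+1)) hw.le]

lemma J3_eq (p n : ℕ) (hn : 1 ≤ n) (lam w : ℝ) (hw : 0 < w) (j : ℕ) :
    (1 + w) * Jj p n 3 lam w j = (2 * Ss p n 2 j) * Jj p n 2 lam w j := by
  have hS : 0 < Ss p n 2 j := Ss_pos p n 2 hn (by norm_num) j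
  have hb : (0 : ℝ) < 1 / ((1 + w) / 2) := by positivity
  have h32 : Ss p n 3 j = Ss p n 2 j + 1 := by unfold Ss; push_cast; ring
  unfold Jj
  rw [h32, Real.Gamma_add_one hS.ne', Real.rpow_add_one hb.ne']
  have hwne : (1 + w) ≠ 0 := by positivity
  field_simp

end Stmt12Aux

open Stmt12Aux

/-- for p, n ≥ 1, λ ≥ 0 and w > 0, the integrals
∫ u² f_p(uw;λ) f_n(u) du and ∫ u³ f_p(uw;λ) f_n(u) du are finite and positive and
(n+p+2)·∫ u² f_p(uw;λ) f_n(u) du ≤ (1+w)·∫ u³ f_p(uw;λ) f_n(u) du. -/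
theorem stmt_12 (p n : ℕ) (hp : 1 ≤ p) (hn : 1 ≤ n) (lam : ℝ) (hlam : 0 ≤ lam)
    (w : ℝ) (hw : 0 < w) :
    IntegrableOn (fun u => u ^ 2 * ncChiSqPdf p lam (u * w) * chiSqPdf n u) (Ioi 0) ∧
    IntegrableOn (fun u => u ^ 3 * ncChiSqPdf p lam (u * w) * chiSqPdf n u) (Ioi 0) ∧
    (0 < ∫ u in Ioi (0 : ℝ), u ^ 2 * ncChiSqPdf p lam (u * w) * chiSqPdf n u) ∧
    (0 < ∫ u in Ioi (0 : ℝ), u ^ 3 * ncChiSqPdf p lam (u * w) * chiSqPdf n u) ∧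
    ((n : ℝ) + p + 2) * ∫ u in Ioi (0 : ℝ), u ^ 2 * ncChiSqPdf p lam (u * w) * chiSqPdf n u
      ≤ (1 + w) * ∫ u in Ioi (0 : ℝ), u ^ 3 * ncChiSqPdf p lam (u * w) * chiSqPdf n u := by
  -- the per-term functions
  set h : ℕ → ℕ → ℝ → ℝ := fun m j u =>
    u ^ m * (cj lam j * chiSqPdf (p + 2 * j) (u * w)) * chiSqPdf n u with hh_def
  have hnn_h : ∀ m j u, 0 ≤ h m j u := by
    intro m j u
    by_cases hu : 0 < u
    · exact mul_nonneg (mul_nonneg (by positivity)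
        (mul_nonneg (cj_nonneg lam hlam j) (chiSqPdf_nonneg _ _))) (chiSqPdf_nonneg _ _)
    · simp [hh_def, chiSqPdf_of_nonpos n hu]
  have hmeas_h : ∀ m j, Measurable (h m j) := by
    intro m j
    exact ((measurable_id.pow_const m).mul
      (((measurable_chiSqPdf _).comp (measurable_id.mul_const w)).const_mul _)).mul
      (measurable_chiSqPdf n)
  have hF : ∀ (m : ℕ) (u : ℝ),
      u ^ m * ncChiSqPdf p lam (u * w) * chiSqPdf n u = ∑' j, h m j u := by
    intro m u
    have : ncChiSqPdf p lam (u * w) = ∑' j, cj lam j * chiSqPdf (p + 2 * j) (u * w) := rfl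
    rw [this, mul_assoc, ← tsum_mul_right, ← tsum_mul_left]
    refine tsum_congr fun j => ?_
    simp only [hh_def]
    ring
  have hmeasF : ∀ m : ℕ, Measurable (fun u : ℝ => u ^ m * ncChiSqPdf p lam (u * w) * chiSqPdf n u) := by
    intro m
    exact ((measurable_id.pow_const m).mul
      ((measurable_ncChiSqPdf p lam hlam).comp (measurable_id.mul_const w))).mul
      (measurable_chiSqPdf n)
  have hterm : ∀ (m : ℕ), 1 ≤ m → ∀ j, IntegrableOn (h m j) (Ioi 0) ∧
      ∫ u in Ioi (0 : ℝ), h m j u = Jj p n m lam w j := by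
    intro m hm j
    exact term_eval p n m j hp hn hm lam w hw
  have hsum : ∀ m : ℕ, 1 ≤ m → Summable (Jj p n m lam w) := by
    intro m hm
    exact J_summable p n m hp hn hm lam w hlam hw
  have hJnn : ∀ m : ℕ, 1 ≤ m → ∀ j, 0 ≤ Jj p n m lam w j := by
    intro m hm j
    exact Jj_nonneg p n m hp hn hm lam w hlam hw j
  -- lintegral of each term
  have hlint : ∀ (m : ℕ), 1 ≤ m → ∀ j,
      ∫⁻ u in Ioi (0 : ℝ), ENNReal.ofReal (h m j u) = ENNReal.ofReal (Jj p n m lam w j) := by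
    intro m hm j
    rw [← MeasureTheory.ofReal_integral_eq_lintegral_ofReal (hterm m hm j).1
      (Filter.Eventually.of_forall fun u => hnn_h m j u), (hterm m hm j).2]
  have hlint_sum : ∀ (m : ℕ), 1 ≤ m →
      ∑' j, ∫⁻ u in Ioi (0 : ℝ), ENNReal.ofReal (h m j u)
        = ENNReal.ofReal (∑' j, Jj p n m lam w j) := by
    intro m hm
    rw [ENNReal.ofReal_tsum_of_nonneg (hJnn m hm) (hsum m hm)]
    exact tsum_congr fun j => hlint m hm j
  -- main: integrability and value of the full integral
  have main : ∀ (m : ℕ), 1 ≤ m →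
      IntegrableOn (fun u : ℝ => u ^ m * ncChiSqPdf p lam (u * w) * chiSqPdf n u) (Ioi 0) ∧
      ∫ u in Ioi (0 : ℝ), u ^ m * ncChiSqPdf p lam (u * w) * chiSqPdf n u
        = ∑' j, Jj p n m lam w j := by
    intro m hm
    have hFnn : ∀ u : ℝ, 0 ≤ u ^ m * ncChiSqPdf p lam (u * w) * chiSqPdf n u := by
      intro u
      rw [hF m u]
      exact tsum_nonneg fun j => hnn_h m j u
    have hInt : IntegrableOn
        (fun u : ℝ => u ^ m * ncChiSqPdf p lam (u * w) * chiSqPdf n u) (Ioi 0) := by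
      refine ⟨(hmeasF m).aestronglyMeasurable, ?_⟩
      rw [hasFiniteIntegral_iff_ofReal (Filter.Eventually.of_forall hFnn)]
      calc ∫⁻ u in Ioi (0 : ℝ), ENNReal.ofReal (u ^ m * ncChiSqPdf p lam (u * w) * chiSqPdf n u)
          ≤ ∫⁻ u in Ioi (0 : ℝ), ∑' j, ENNReal.ofReal (h m j u) := by
            refine lintegral_mono fun u => ?_
            rw [hF m u]
            exact ofReal_tsum_le fun j => hnn_h m j u
        _ = ∑' j, ∫⁻ u in Ioi (0 : ℝ), ENNReal.ofReal (h m j u) :=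
            lintegral_tsum fun j => ((hmeas_h m j).ennreal_ofReal).aemeasurable
        _ = ENNReal.ofReal (∑' j, Jj p n m lam w j) := hlint_sum m hm
        _ < ⊤ := ENNReal.ofReal_lt_top
    refine ⟨hInt, ?_⟩
    have heq : (fun u : ℝ => u ^ m * ncChiSqPdf p lam (u * w) * chiSqPdf n u)
        = fun u => ∑' j, h m j u := funext fun u => hF m u
    have hnorm : ∀ j : ℕ, (∫⁻ u in Ioi (0:ℝ), (‖h m j u‖₊ : ℝ≥0∞))
        = ENNReal.ofReal (Jj p n m lam w j) := by
      intro j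
      rw [← hlint m hm j]
      exact lintegral_congr fun u => Real.enorm_eq_ofReal (hnn_h m j u)
    have hne : (∑' j, ∫⁻ u in Ioi (0:ℝ), (‖h m j u‖₊ : ℝ≥0∞)) ≠ ⊤ := by
      rw [tsum_congr hnorm,
        ← ENNReal.ofReal_tsum_of_nonneg (hJnn m hm) (hsum m hm)]
      exact ENNReal.ofReal_ne_top
    rw [heq, MeasureTheory.integral_tsum
      (fun j => (hmeas_h m j).aestronglyMeasurable) hne]
    exact tsum_congr fun j => (hterm m hm j).2
  obtain ⟨hInt2, hVal2⟩ := main 2 (by norm_num)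
  obtain ⟨hInt3, hVal3⟩ := main 3 (by norm_num)
  have hpos2 : 0 < ∫ u in Ioi (0 : ℝ), u ^ 2 * ncChiSqPdf p lam (u * w) * chiSqPdf n u := by
    rw [hVal2]
    exact lt_of_lt_of_le (Jj_pos0 p n 2 hp hn (by norm_num) lam w hw)
      (Summable.le_tsum (hsum 2 (by norm_num)) 0 fun j _ => hJnn 2 (by norm_num) j)
  have hpos3 : 0 < ∫ u in Ioi (0 : ℝ), u ^ 3 * ncChiSqPdf p lam (u * w) * chiSqPdf n u := by
    rw [hVal3]
    exact lt_of_lt_of_le (Jj_pos0 p n 3 hp hn (by norm_num) lam w hw)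
      (Summable.le_tsum (hsum 3 (by norm_num)) 0 fun j _ => hJnn 3 (by norm_num) j)
  refine ⟨hInt2, hInt3, hpos2, hpos3, ?_⟩
  rw [hVal2, hVal3, ← tsum_mul_left, ← tsum_mul_left]
  refine Summable.tsum_le_tsum (fun j => ?_) ((hsum 2 (by norm_num)).mul_left _)
    ((hsum 3 (by norm_num)).mul_left _)
  rw [J3_eq p n hn lam w hw j]
  have hle : (n : ℝ) + p + 2 ≤ 2 * Ss p n 2 j := by
    have h2 : (1 : ℝ) ≤ (p : ℝ) := by exact_mod_cast hp
    have h4 : (0 : ℝ) ≤ (j : ℝ) := Nat.cast_nonneg j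
    unfold Ss; push_cast; linarith
  exact mul_le_mul_of_nonneg_right hle (hJnn 2 (by norm_num) j)
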